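/- Any two P-bases of a finitely generated P-closed set Ω ⊆ 𝔽ⁿ are finite and have the same number of elements. -/

import Mathlib

/- Common setup: free multivariate skew polynomial rings over a division ring. -/

open Matrix Finsupp

/-- The underlying left `𝔽`-module of the free multivariate skew polynomial ring:
the free left `𝔽`-module with basis the free monoid on `n` symbols. -/
abbrev SkewPoly (𝔽 : Type*) [DivisionRing 𝔽] (n : ℕ) : Type _ := FreeMonoid (Fin n) →₀ 𝔽

namespace SkewPoly

variable {𝔽 : Type*} [DivisionRing 𝔽] {n : ℕ}

/-- The variable `xᵢ` as a skew polynomial. -/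
noncomputable def X (𝔽 : Type*) [DivisionRing 𝔽] {n : ℕ} (i : Fin n) : SkewPoly 𝔽 n :=
  Finsupp.single (FreeMonoid.of i) 1

/-- The constant `a` as a skew polynomial (coefficient on the empty word). -/
noncomputable def C {𝔽 : Type*} [DivisionRing 𝔽] (n : ℕ) (a : 𝔽) :
    SkewPoly 𝔽 n := Finsupp.single 1 a

/-- The degree of a skew polynomial: the maximal length of a word in its support
(`⊥` for the zero polynomial). -/
noncomputable def deg (F : SkewPoly 𝔽 n) : WithBot ℕ :=
  F.support.sup fun m => ((FreeMonoid.length m : ℕ) : WithBot ℕ)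

/-- A matrix morphism `σ : 𝔽 → Mₙ(𝔽)`: a unital ring homomorphism. -/
def IsMatrixMorphism (σ : 𝔽 → Matrix (Fin n) (Fin n) 𝔽) : Prop :=
  σ 1 = 1 ∧ (∀ a b : 𝔽, σ (a + b) = σ a + σ b) ∧ (∀ a b : 𝔽, σ (a * b) = σ a * σ b)

/-- A `σ`-vector derivation `δ : 𝔽 → 𝔽ⁿ`: additive with `δ(ab) = σ(a)δ(b) + δ(a)b`. -/
def IsVectorDerivation (σ : 𝔽 → Matrix (Fin n) (Fin n) 𝔽) (δ : 𝔽 → Fin n → 𝔽) : Prop :=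
  (∀ a b : 𝔽, δ (a + b) = δ a + δ b) ∧
    (∀ a b : 𝔽, δ (a * b) = σ a *ᵥ δ b + fun i => δ a i * b)

/-- A multiplication on the free module `SkewPoly 𝔽 n` making it a ring (with the
existing addition) whose identity is the empty word, which restricts to concatenation
on monomials, is additive on degrees of nonzero elements, and for which left
multiplication by constants is scalar multiplication. -/
structure RawMul (𝔽 : Type*) [DivisionRing 𝔽] (n : ℕ) where
  /-- the multiplication -/
  mul : SkewPoly 𝔽 n → SkewPoly 𝔽 n → SkewPoly 𝔽 n
  mul_add : ∀ F G H : SkewPoly 𝔽 n, mul F (G + H) = mul F G + mul F H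
  add_mul : ∀ F G H : SkewPoly 𝔽 n, mul (F + G) H = mul F H + mul G H
  mul_assoc : ∀ F G H : SkewPoly 𝔽 n, mul (mul F G) H = mul F (mul G H)
  one_mul : ∀ F : SkewPoly 𝔽 n, mul (C n 1) F = F
  mul_one : ∀ F : SkewPoly 𝔽 n, mul F (C n 1) = F
  mono_mul_mono : ∀ m m' : FreeMonoid (Fin n),
    mul (Finsupp.single m 1) (Finsupp.single m' 1) = Finsupp.single (m * m') 1
  const_mul : ∀ (a : 𝔽) (F : SkewPoly 𝔽 n), mul (C n a) F = a • F
  deg_mul : ∀ F G : SkewPoly 𝔽 n, F ≠ 0 → G ≠ 0 → deg (mul F G) = deg F + deg G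

/-- The multiplication `S` satisfies the commutation rule
`xᵢ a = Σⱼ σ_{i,j}(a) xⱼ + δᵢ(a)`. -/
def HasCommRule (S : RawMul 𝔽 n) (σ : 𝔽 → Matrix (Fin n) (Fin n) 𝔽)
    (δ : 𝔽 → Fin n → 𝔽) : Prop :=
  ∀ (i : Fin n) (a : 𝔽),
    S.mul (X 𝔽 i) (C n a) =
      (∑ j : Fin n, Finsupp.single (FreeMonoid.of j) (σ a i j)) + C n (δ a i)

/-- `F = Σᵢ Gᵢ (xᵢ - aᵢ) + b`, i.e. `b` is a remainder of `F` upon right division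
by `x₁ - a₁, …, xₙ - aₙ`; equivalently `F - b` lies in the left ideal generated by
the `xᵢ - aᵢ`. -/
def Decomposes (S : RawMul 𝔽 n) (a : Fin n → 𝔽) (F : SkewPoly 𝔽 n) (b : 𝔽) : Prop :=
  ∃ G : Fin n → SkewPoly 𝔽 n,
    F = (∑ i : Fin n, S.mul (G i) (X 𝔽 i - C n (a i))) + C n b

/-- The evaluation of `F` at the point `a`: the unique `b ∈ 𝔽` such that `F - b`
lies in the left ideal generated by `x₁ - a₁, …, xₙ - aₙ`. -/
noncomputable def eval (S : RawMul 𝔽 n) (a : Fin n → 𝔽) (F : SkewPoly 𝔽 n) : 𝔽 :=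
  letI := Classical.propDecidable (∃ b : 𝔽, Decomposes S a F b)
  if h : ∃ b : 𝔽, Decomposes S a F b then h.choose else 0

/-- The `(σ,δ)`-conjugate `a^c = σ(c) a c⁻¹ + δ(c) c⁻¹` of `a` with respect to `c`. -/
noncomputable def conj (σ : 𝔽 → Matrix (Fin n) (Fin n) 𝔽) (δ : 𝔽 → Fin n → 𝔽)
    (a : Fin n → 𝔽) (c : 𝔽) : Fin n → 𝔽 :=
  fun i => (σ c *ᵥ a) i * c⁻¹ + δ c i * c⁻¹

/-- `I(Ω)`: the set of skew polynomials vanishing at every point of `Ω`. -/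
def zeroIdeal (S : RawMul 𝔽 n) (Ω : Set (Fin n → 𝔽)) : Set (SkewPoly 𝔽 n) :=
  {F | ∀ a ∈ Ω, eval S a F = 0}

/-- The left ideal of `SkewPoly 𝔽 n` generated by `x₁ - a₁, …, xₙ - aₙ`
(the set of sums of left multiples of the generators). -/
def pointIdeal (S : RawMul 𝔽 n) (a : Fin n → 𝔽) : Set (SkewPoly 𝔽 n) :=
  {F | ∃ G : Fin n → SkewPoly 𝔽 n, F = ∑ i : Fin n, S.mul (G i) (X 𝔽 i - C n (a i))}

/-- The P-closure `Ω̄ = Z(I(Ω))` of a set of points `Ω`. -/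
def pClosure (S : RawMul 𝔽 n) (Ω : Set (Fin n → 𝔽)) : Set (Fin n → 𝔽) :=
  {a | ∀ F ∈ zeroIdeal S Ω, eval S a F = 0}

/-- `Ω` is P-closed if it equals its P-closure. -/
def IsPClosed (S : RawMul 𝔽 n) (Ω : Set (Fin n → 𝔽)) : Prop := pClosure S Ω = Ω

/-- `B` is P-independent: no point of `B` lies in the P-closure of the rest. -/
def PIndep (S : RawMul 𝔽 n) (B : Set (Fin n → 𝔽)) : Prop :=
  ∀ a ∈ B, a ∉ pClosure S (B \ {a})

/-- `B` is a P-basis of `Ω`: a P-independent subset of `Ω` whose P-closure is `Ω`. -/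
def IsPBasis (S : RawMul 𝔽 n) (B Ω : Set (Fin n → 𝔽)) : Prop :=
  B ⊆ Ω ∧ PIndep S B ∧ pClosure S B = Ω

/-- `Ω` is finitely generated: it is the P-closure of a finite subset of itself. -/
def FinGen (S : RawMul 𝔽 n) (Ω : Set (Fin n → 𝔽)) : Prop :=
  ∃ G : Set (Fin n → 𝔽), G.Finite ∧ G ⊆ Ω ∧ pClosure S G = Ω

/-- The rank of a P-closed set: the (common) cardinality of its P-bases. -/
noncomputable def pRank (S : RawMul 𝔽 n) (Ω : Set (Fin n → 𝔽)) : ℕ :=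
  sInf {k : ℕ | ∃ B : Finset (Fin n → 𝔽), IsPBasis S ↑B Ω ∧ B.card = k}

/-- The image of the evaluation map `E_Ω : R → 𝔽^Ω`, as a left `𝔽`-subspace of `𝔽^Ω`
(the span of the image; the image is itself a subspace since evaluation is left linear). -/
noncomputable def evalSpan (S : RawMul 𝔽 n) (Ω : Set (Fin n → 𝔽)) :
    Submodule 𝔽 (↥Ω → 𝔽) :=
  Submodule.span 𝔽 (Set.range fun F : SkewPoly 𝔽 n => fun a : ↥Ω => eval S ↑a F)

/-- `I` is a two-sided ideal with respect to the multiplication `S`. -/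
def IsTwoSidedIdealSet (S : RawMul 𝔽 n) (I : Set (SkewPoly 𝔽 n)) : Prop :=
  (0 : SkewPoly 𝔽 n) ∈ I ∧ (∀ F ∈ I, ∀ G ∈ I, F + G ∈ I) ∧ (∀ F ∈ I, -F ∈ I) ∧
    (∀ F ∈ I, ∀ G : SkewPoly 𝔽 n, S.mul G F ∈ I) ∧
    (∀ F ∈ I, ∀ G : SkewPoly 𝔽 n, S.mul F G ∈ I)


/-- The left row-rank of the skew Vandermonde matrix `V_d(G)`: the dimension of the
left `𝔽`-span of its rows `(N_m(c))_{c ∈ G}`, indexed by the words `m` of length `< d`,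
where `N_m(c)` is the evaluation of the monomial `m` at the point `c`. -/
noncomputable def vandermondeRank (S : RawMul 𝔽 n) (G : Finset (Fin n → 𝔽)) (d : ℕ) :
    Cardinal :=
  Module.rank 𝔽 ↥(Submodule.span 𝔽 (Set.range
    fun m : {m : FreeMonoid (Fin n) // FreeMonoid.length m < d} =>
      fun c : ↥G => eval S ↑c (Finsupp.single (m : FreeMonoid (Fin n)) (1 : 𝔽))))

end SkewPoly

open SkewPoly

namespace SkewPoly

variable {𝔽 : Type*} [DivisionRing 𝔽] {n : ℕ}

section RawMulLemmas

variable (S : RawMul 𝔽 n)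

lemma mul_zero' (F : SkewPoly 𝔽 n) : S.mul F 0 = 0 := by
  have h := S.mul_add F 0 0
  simp only [add_zero] at h
  exact (left_eq_add.mp h).symm ▸ rfl

lemma zero_mul' (F : SkewPoly 𝔽 n) : S.mul 0 F = 0 := by
  have h := S.add_mul 0 0 F
  simp only [add_zero] at h
  exact (left_eq_add.mp h).symm ▸ rfl

lemma neg_mul' (F G : SkewPoly 𝔽 n) : S.mul (-F) G = -(S.mul F G) := by
  have h := S.add_mul F (-F) G
  simp only [add_neg_cancel, zero_mul'] at h
  exact (neg_eq_of_add_eq_zero_right h.symm).symm ▸ rfl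

lemma sub_mul' (F F' G : SkewPoly 𝔽 n) :
    S.mul (F - F') G = S.mul F G - S.mul F' G := by
  rw [sub_eq_add_neg, S.add_mul, neg_mul', sub_eq_add_neg]

lemma smul_mul' (c : 𝔽) (F G : SkewPoly 𝔽 n) :
    S.mul (c • F) G = c • S.mul F G := by
  rw [← S.const_mul c F, S.mul_assoc, S.const_mul]

lemma mul_sum' {ι : Type*} (P : SkewPoly 𝔽 n) (s : Finset ι) (f : ι → SkewPoly 𝔽 n) :
    S.mul P (∑ j ∈ s, f j) = ∑ j ∈ s, S.mul P (f j) := by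
  classical
  induction s using Finset.induction_on with
  | empty => simp [mul_zero']
  | @insert _ _ h ih => rw [Finset.sum_insert h, S.mul_add, ih, Finset.sum_insert h]

lemma sum_mul' {ι : Type*} (P : SkewPoly 𝔽 n) (s : Finset ι) (f : ι → SkewPoly 𝔽 n) :
    S.mul (∑ j ∈ s, f j) P = ∑ j ∈ s, S.mul (f j) P := by
  classical
  induction s using Finset.induction_on with
  | empty => simp [zero_mul']
  | @insert _ _ h ih => rw [Finset.sum_insert h, S.add_mul, ih, Finset.sum_insert h]

lemma single_eq_smul (m : FreeMonoid (Fin n)) (c : 𝔽) :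
    (Finsupp.single m c : SkewPoly 𝔽 n) = c • Finsupp.single m 1 := by
  rw [Finsupp.smul_single, smul_eq_mul, mul_one]

lemma C_add (x y : 𝔽) : C n (x + y) = C n x + C n y := by
  simp [C, Finsupp.single_add]

lemma C_sum {ι : Type*} (s : Finset ι) (f : ι → 𝔽) :
    C n (∑ j ∈ s, f j) = ∑ j ∈ s, C n (f j) := by
  classical
  induction s using Finset.induction_on with
  | empty => simp [C]
  | @insert _ _ h ih => rw [Finset.sum_insert h, C_add, ih, Finset.sum_insert h]

lemma smul_C (c x : 𝔽) : c • (C n x : SkewPoly 𝔽 n) = C n (c * x) := by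
  simp [C, Finsupp.smul_single]

lemma mul_single_X (m : FreeMonoid (Fin n)) (c : 𝔽) (i : Fin n) :
    S.mul (Finsupp.single m c) (X 𝔽 i) = Finsupp.single (m * FreeMonoid.of i) c := by
  rw [single_eq_smul, smul_mul', X, S.mono_mul_mono]
  simp [Finsupp.smul_single]

lemma mul_X_eq_mapDomain (G : SkewPoly 𝔽 n) (i : Fin n) :
    S.mul G (X 𝔽 i) = Finsupp.mapDomain (· * FreeMonoid.of i) G := by
  induction G using Finsupp.induction with
  | zero => simp [zero_mul']
  | single_add m b f _ _ ih =>
      rw [S.add_mul, ih, mul_single_X, Finsupp.mapDomain_add, Finsupp.mapDomain_single]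

end RawMulLemmas
end SkewPoly
namespace SkewPoly

variable {𝔽 : Type*} [DivisionRing 𝔽] {n : ℕ}

section Decomp

variable {S : RawMul 𝔽 n} {σ : 𝔽 → Matrix (Fin n) (Fin n) 𝔽} {δ : 𝔽 → Fin n → 𝔽}

lemma decomposes_C (a : Fin n → 𝔽) (b : 𝔽) : Decomposes S a (C n b) b :=
  ⟨0, by simp [zero_mul']⟩

lemma Decomposes.add {a : Fin n → 𝔽} {F F' : SkewPoly 𝔽 n} {b b' : 𝔽}
    (h : Decomposes S a F b) (h' : Decomposes S a F' b') :
    Decomposes S a (F + F') (b + b') := by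
  obtain ⟨G, hG⟩ := h; obtain ⟨G', hG'⟩ := h'
  refine ⟨fun i => G i + G' i, ?_⟩
  rw [hG, hG', C_add]
  simp only [S.add_mul, Finset.sum_add_distrib]
  abel

lemma Decomposes.smul {a : Fin n → 𝔽} {F : SkewPoly 𝔽 n} {b : 𝔽} (c : 𝔽)
    (h : Decomposes S a F b) : Decomposes S a (c • F) (c * b) := by
  obtain ⟨G, hG⟩ := h
  refine ⟨fun i => c • G i, ?_⟩
  rw [hG, smul_add, Finset.smul_sum, ← smul_C]
  simp only [smul_mul']

lemma Decomposes.X_mul (hS : HasCommRule S σ δ) {a : Fin n → 𝔽} {F : SkewPoly 𝔽 n} {b : 𝔽}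
    (i : Fin n) (h : Decomposes S a F b) :
    Decomposes S a (S.mul (X 𝔽 i) F) ((∑ j, σ b i j * a j) + δ b i) := by
  obtain ⟨G, hG⟩ := h
  refine ⟨fun j => S.mul (X 𝔽 i) (G j) + C n (σ b i j), ?_⟩
  rw [hG, S.mul_add, mul_sum' S]
  have h1 : ∀ j, S.mul (S.mul (X 𝔽 i) (G j) + C n (σ b i j)) (X 𝔽 j - C n (a j))
      = S.mul (X 𝔽 i) (S.mul (G j) (X 𝔽 j - C n (a j)))
        + (Finsupp.single (FreeMonoid.of j) (σ b i j) - C n (σ b i j * a j)) := by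
    intro j
    rw [S.add_mul, ← S.mul_assoc, S.const_mul, smul_sub, ← smul_C]
    simp [X, Finsupp.smul_single]
  simp only [h1, hS i b, Finset.sum_add_distrib, Finset.sum_sub_distrib, C_add, C_sum]
  abel

lemma exists_decomposes (hS : HasCommRule S σ δ) (a : Fin n → 𝔽) (F : SkewPoly 𝔽 n) :
    ∃ b, Decomposes S a F b := by
  induction F using Finsupp.induction with
  | zero =>
      refine ⟨0, ?_⟩
      have := decomposes_C (S := S) a 0
      simpa [C] using this
  | single_add m c f _ _ ih =>
      obtain ⟨b, hb⟩ := ih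
      -- decompose the monomial `single m 1`
      have hmono : ∀ m : FreeMonoid (Fin n), ∃ b', Decomposes S a (Finsupp.single m 1) b' := by
        intro m
        induction m using FreeMonoid.recOn with
        | one => exact ⟨1, decomposes_C a 1⟩
        | of_mul x xs ihx =>
            obtain ⟨b', hb'⟩ := ihx
            have : S.mul (X 𝔽 x) (Finsupp.single xs 1)
                = Finsupp.single (FreeMonoid.of x * xs) (1 : 𝔽) := S.mono_mul_mono _ _
            exact ⟨_, this ▸ hb'.X_mul hS x⟩
      obtain ⟨b', hb'⟩ := hmono m
      refine ⟨c * b' + b, ?_⟩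
      have : (Finsupp.single m c : SkewPoly 𝔽 n) = c • Finsupp.single m 1 := single_eq_smul m c
      exact this ▸ (hb'.smul c).add hb

end Decomp
end SkewPoly
namespace SkewPoly

variable {𝔽 : Type*} [DivisionRing 𝔽] {n : ℕ}

section Unique

variable {S : RawMul 𝔽 n}

lemma C_sub (x y : 𝔽) : C n (x - y) = C n x - C n y := by
  simp [C, Finsupp.single_sub]

lemma mul_neg' (S : RawMul 𝔽 n) (F G : SkewPoly 𝔽 n) : S.mul F (-G) = -(S.mul F G) := by
  have h := S.mul_add F G (-G)
  simp only [add_neg_cancel, mul_zero'] at h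
  exact (neg_eq_of_add_eq_zero_right h.symm).symm ▸ rfl

lemma mul_sub'' (S : RawMul 𝔽 n) (F G H : SkewPoly 𝔽 n) :
    S.mul F (G - H) = S.mul F G - S.mul F H := by
  rw [sub_eq_add_neg, S.mul_add, mul_neg', sub_eq_add_neg]

lemma length_le_of_mem_support_mul_C (G : SkewPoly 𝔽 n) (c : 𝔽)
    {w : FreeMonoid (Fin n)} (hw : w ∈ (S.mul G (C n c)).support) :
    FreeMonoid.length w ≤ G.support.sup FreeMonoid.length := by
  rcases eq_or_ne c 0 with rfl | hc
  · rw [show (C n (0:𝔽)) = 0 by simp [C], mul_zero'] at hw; simp at hw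
  rcases eq_or_ne G 0 with rfl | hG
  · rw [zero_mul'] at hw; simp at hw
  have hC : (C n c : SkewPoly 𝔽 n) ≠ 0 := by
    simp [C, Finsupp.single_eq_zero, hc]
  have hd := S.deg_mul G (C n c) hG hC
  have hdegC : deg (C n c : SkewPoly 𝔽 n) = (0 : ℕ) := by
    rw [deg, C, Finsupp.support_single_ne_zero _ hc]
    simp
  rw [hdegC] at hd
  rw [show ((0:ℕ):WithBot ℕ) = 0 from rfl, add_zero] at hd
  have h1 : ((FreeMonoid.length w : ℕ) : WithBot ℕ) ≤ deg (S.mul G (C n c)) :=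
    Finset.le_sup (f := fun m => ((FreeMonoid.length m : ℕ) : WithBot ℕ)) hw
  have h2 : deg G ≤ ((G.support.sup FreeMonoid.length : ℕ) : WithBot ℕ) :=
    Finset.sup_le fun m hm => WithBot.coe_le_coe.mpr (Finset.le_sup hm)
  exact WithBot.coe_le_coe.mp ((h1.trans (hd.le)).trans h2)

lemma eq_zero_of_sum_eq_C (hn : 0 < n) (a : Fin n → 𝔽) (G : Fin n → SkewPoly 𝔽 n) (d : 𝔽)
    (h : (∑ i : Fin n, S.mul (G i) (X 𝔽 i - C n (a i))) = C n d) : d = 0 := by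
  classical
  have hre : (∑ i : Fin n, S.mul (G i) (X 𝔽 i))
      = C n d + ∑ i : Fin n, S.mul (G i) (C n (a i)) := by
    have : ∀ i : Fin n, S.mul (G i) (X 𝔽 i - C n (a i))
        = S.mul (G i) (X 𝔽 i) - S.mul (G i) (C n (a i)) := fun i => mul_sub'' S _ _ _
    simp only [this, Finset.sum_sub_distrib] at h
    rw [sub_eq_iff_eq_add] at h
    exact h
  by_cases hz : ∀ i, G i = 0
  · simp only [hz] at h
    simp only [zero_mul', Finset.sum_const_zero] at h
    have := h.symm
    rwa [C, Finsupp.single_eq_zero] at this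
  push_neg at hz
  obtain ⟨j, hj⟩ := hz
  exfalso
  set k : ℕ := Finset.univ.sup (fun i : Fin n => (G i).support.sup FreeMonoid.length) with hk
  have hnonempty : (Finset.univ : Finset (Fin n)).Nonempty := ⟨⟨0, hn⟩, Finset.mem_univ _⟩
  -- find i₀, m₀ with m₀ ∈ supp (G i₀) and length m₀ = k
  have hwit : ∃ i₀ : Fin n, ∃ m₀ ∈ (G i₀).support, FreeMonoid.length m₀ = k := by
    obtain ⟨i₁, _, hi₁⟩ := Finset.exists_mem_eq_sup Finset.univ hnonempty
      (fun i : Fin n => (G i).support.sup FreeMonoid.length)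
    rcases (G i₁).support.eq_empty_or_nonempty with he | hne
    · have hk0 : k = 0 := by rw [hk, hi₁, he]; simp
      have hsuppj : (G j).support.Nonempty := Finsupp.support_nonempty_iff.mpr hj
      obtain ⟨m₀, hm₀, hm₀eq⟩ := Finset.exists_mem_eq_sup _ hsuppj FreeMonoid.length
      refine ⟨j, m₀, hm₀, ?_⟩
      have : (G j).support.sup FreeMonoid.length ≤ k :=
        Finset.le_sup (f := fun i : Fin n => (G i).support.sup FreeMonoid.length)
          (Finset.mem_univ j)
      omega
    · obtain ⟨m₀, hm₀, hm₀eq⟩ := Finset.exists_mem_eq_sup _ hne FreeMonoid.length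
      exact ⟨i₁, m₀, hm₀, by rw [hk, hi₁, hm₀eq]⟩
  obtain ⟨i₀, m₀, hm₀, hlen⟩ := hwit
  set w₀ : FreeMonoid (Fin n) := m₀ * FreeMonoid.of i₀ with hw₀
  have hlenw₀ : FreeMonoid.length w₀ = k + 1 := by
    rw [hw₀, FreeMonoid.length_mul, FreeMonoid.length_of, hlen]
  -- LHS coefficient at w₀
  have hL : (∑ i : Fin n, S.mul (G i) (X 𝔽 i)) w₀ = G i₀ m₀ := by
    rw [Finsupp.finset_sum_apply]
    rw [Finset.sum_eq_single i₀]
    · rw [mul_X_eq_mapDomain, hw₀,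
        Finsupp.mapDomain_apply (mul_left_injective (FreeMonoid.of i₀))]
    · intro i _ hi
      rw [mul_X_eq_mapDomain]
      apply Finsupp.mapDomain_notin_range
      rintro ⟨m, hm⟩
      apply hi
      have h' : FreeMonoid.toList m ++ [i] = FreeMonoid.toList m₀ ++ [i₀] := by
        have := congrArg FreeMonoid.toList hm
        simpa [FreeMonoid.toList_mul, FreeMonoid.toList_of, hw₀] using this
      have := List.singleton_inj.mp (List.append_inj' h' rfl).2
      exact Fin.val_injective (congrArg Fin.val this) ▸ this
    · intro hmem; exact absurd (Finset.mem_univ i₀) hmem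
  -- RHS coefficient at w₀ is 0
  have hR : (C n d + ∑ i : Fin n, S.mul (G i) (C n (a i))) w₀ = 0 := by
    rw [Finsupp.add_apply, Finsupp.finset_sum_apply]
    have h1 : (C n d : SkewPoly 𝔽 n) w₀ = 0 := by
      apply Finsupp.single_eq_of_ne
      intro h1
      have := congrArg FreeMonoid.length h1
      simp [hlenw₀] at this
    have h2 : ∀ i ∈ Finset.univ, (S.mul (G i) (C n (a i))) w₀ = 0 := by
      intro i _
      by_contra hne
      have hmem : w₀ ∈ (S.mul (G i) (C n (a i))).support :=
        Finsupp.mem_support_iff.mpr hne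
      have := length_le_of_mem_support_mul_C (G i) (a i) hmem
      have hle : (G i).support.sup FreeMonoid.length ≤ k :=
        Finset.le_sup (f := fun i : Fin n => (G i).support.sup FreeMonoid.length)
          (Finset.mem_univ i)
      omega
    rw [h1, Finset.sum_eq_zero h2, add_zero]
  rw [hre] at hL
  rw [hL] at hR
  exact (Finsupp.mem_support_iff.mp hm₀) hR

end Unique
end SkewPoly
namespace SkewPoly

variable {𝔽 : Type*} [DivisionRing 𝔽] {n : ℕ}

section Eval

variable {S : RawMul 𝔽 n} {σ : 𝔽 → Matrix (Fin n) (Fin n) 𝔽} {δ : 𝔽 → Fin n → 𝔽}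

lemma Decomposes.eq (hn : 0 < n) {a : Fin n → 𝔽} {F : SkewPoly 𝔽 n} {b b' : 𝔽}
    (h : Decomposes S a F b) (h' : Decomposes S a F b') : b = b' := by
  obtain ⟨G, hG⟩ := h; obtain ⟨G', hG'⟩ := h'
  have heq : (∑ i : Fin n, S.mul (G i - G' i) (X 𝔽 i - C n (a i))) = C n (b' - b) := by
    simp only [sub_mul', Finset.sum_sub_distrib, C_sub]
    have h2 := hG.symm.trans hG'
    rw [sub_eq_sub_iff_add_eq_add, h2]
    exact add_comm _ _
  have h0 := eq_zero_of_sum_eq_C hn a (fun i => G i - G' i) (b' - b) heq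
  have : b' = b := by
    have := sub_eq_zero.mp h0
    exact this
  exact this.symm

lemma eval_spec (hn : 0 < n) (hS : HasCommRule S σ δ) (a : Fin n → 𝔽) (F : SkewPoly 𝔽 n) :
    Decomposes S a F (eval S a F) := by
  have h : ∃ b, Decomposes S a F b := exists_decomposes hS a F
  rw [eval, dif_pos h]
  exact h.choose_spec

lemma eval_eq (hn : 0 < n) (hS : HasCommRule S σ δ) {a : Fin n → 𝔽} {F : SkewPoly 𝔽 n}
    {b : 𝔽} (h : Decomposes S a F b) : eval S a F = b :=
  (eval_spec hn hS a F).eq hn h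

lemma eval_add (hn : 0 < n) (hS : HasCommRule S σ δ) (a : Fin n → 𝔽) (F F' : SkewPoly 𝔽 n) :
    eval S a (F + F') = eval S a F + eval S a F' :=
  eval_eq hn hS ((eval_spec hn hS a F).add (eval_spec hn hS a F'))

lemma eval_smul (hn : 0 < n) (hS : HasCommRule S σ δ) (a : Fin n → 𝔽) (c : 𝔽)
    (F : SkewPoly 𝔽 n) : eval S a (c • F) = c * eval S a F :=
  eval_eq hn hS ((eval_spec hn hS a F).smul c)

end Eval
end SkewPoly
namespace SkewPoly

variable {𝔽 : Type*} [DivisionRing 𝔽] {n : ℕ}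

section Closure

variable {S : RawMul 𝔽 n}

lemma subset_pClosure (Γ : Set (Fin n → 𝔽)) : Γ ⊆ pClosure S Γ :=
  fun a ha F hF => hF a ha

lemma pClosure_mono {Γ Γ' : Set (Fin n → 𝔽)} (h : Γ ⊆ Γ') :
    pClosure S Γ ⊆ pClosure S Γ' :=
  fun a ha F hF => ha F (fun c hc => hF c (h hc))

lemma PIndep.mono {A B : Set (Fin n → 𝔽)} (hB : PIndep S B) (hAB : A ⊆ B) : PIndep S A :=
  fun a ha hcl => hB a (hAB ha) (pClosure_mono (Set.diff_subset_diff_left hAB) hcl)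

end Closure

section LinAlg

variable (S : RawMul 𝔽 n) {σ : 𝔽 → Matrix (Fin n) (Fin n) 𝔽} {δ : 𝔽 → Fin n → 𝔽}

/-- The evaluation map at a finite set of points, as a linear map. -/
noncomputable def evalLM (hn : 0 < n) (hS : HasCommRule S σ δ)
    (A : Finset (Fin n → 𝔽)) : SkewPoly 𝔽 n →ₗ[𝔽] (↥A → 𝔽) where
  toFun F := fun c => eval S c.1 F
  map_add' F F' := by funext c; exact eval_add hn hS c.1 F F'
  map_smul' c F := by funext x; exact eval_smul hn hS x.1 c F

variable (hn : 0 < n) (hS : HasCommRule S σ δ)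

/-- The rank of the evaluation map at a finite set of points. -/
noncomputable def evalRank (A : Finset (Fin n → 𝔽)) : ℕ :=
  Module.finrank 𝔽 ↥(LinearMap.range (evalLM S hn hS A))

/-- restriction/projection linear map -/
noncomputable def projLM {A B : Finset (Fin n → 𝔽)} (h : A ⊆ B) :
    (↥B → 𝔽) →ₗ[𝔽] (↥A → 𝔽) :=
  LinearMap.pi (fun c : ↥A => LinearMap.proj (⟨c.1, h c.2⟩ : ↥B))

lemma proj_comp {A B : Finset (Fin n → 𝔽)} (h : A ⊆ B) :
    (projLM (𝔽 := 𝔽) h).comp (evalLM S hn hS B) = evalLM S hn hS A := rfl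

lemma evalRank_le_card (A : Finset (Fin n → 𝔽)) : evalRank S hn hS A ≤ A.card := by
  have h1 : evalRank S hn hS A ≤ Module.finrank 𝔽 (↥A → 𝔽) :=
    Submodule.finrank_le _
  rwa [Module.finrank_pi, Fintype.card_coe] at h1

lemma evalRank_mono {A B : Finset (Fin n → 𝔽)} (h : A ⊆ B) :
    evalRank S hn hS A ≤ evalRank S hn hS B := by
  have hr : LinearMap.range (evalLM S hn hS A)
      = Submodule.map (projLM (𝔽 := 𝔽) h) (LinearMap.range (evalLM S hn hS B)) := by
    rw [← LinearMap.range_comp, proj_comp]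
  rw [evalRank, hr]
  exact Submodule.finrank_map_le _ _

lemma evalRank_le_of_closure {A B : Finset (Fin n → 𝔽)} (h : A ⊆ B)
    (hcl : (↑B : Set (Fin n → 𝔽)) ⊆ pClosure S ↑A) :
    evalRank S hn hS B ≤ evalRank S hn hS A := by
  set π := projLM (𝔽 := 𝔽) h
  have hmem : ∀ x : ↥(LinearMap.range (evalLM S hn hS B)),
      π x.1 ∈ LinearMap.range (evalLM S hn hS A) := by
    rintro ⟨x, F, hF⟩
    subst hF
    exact ⟨F, rfl⟩
  set f : ↥(LinearMap.range (evalLM S hn hS B)) →ₗ[𝔽] ↥(LinearMap.range (evalLM S hn hS A)) :=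
    LinearMap.codRestrict _ (π.comp (LinearMap.range (evalLM S hn hS B)).subtype) hmem
  have hker : ∀ x : ↥(LinearMap.range (evalLM S hn hS B)), π x.1 = 0 → x = 0 := by
    rintro ⟨x, F, hF⟩ hx
    subst hF
    have hFzero : F ∈ zeroIdeal S ↑A := by
      intro a ha
      exact congrFun hx ⟨a, ha⟩
    have hz : ∀ c : ↥B, (evalLM S hn hS B) F c = 0 := by
      intro c
      have hc : c.1 ∈ pClosure S (↑A : Set (Fin n → 𝔽)) := hcl c.2
      exact hc F hFzero
    exact Subtype.ext (funext hz)
  have hinj : Function.Injective f := by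
    intro x y hxy
    have h0 : f (x - y) = 0 := by rw [map_sub, hxy, sub_self]
    have : π (x - y).1 = 0 := by
      have := congrArg Subtype.val h0
      exact this
    have := hker (x - y) this
    rwa [sub_eq_zero] at this
  exact LinearMap.finrank_le_finrank_of_injective hinj

lemma evalRank_of_pindep {B : Finset (Fin n → 𝔽)} (hind : PIndep S ↑B) :
    evalRank S hn hS B = B.card := by
  classical
  have htop : LinearMap.range (evalLM S hn hS B) = ⊤ := by
    rw [eq_top_iff]
    intro v _
    rw [pi_eq_sum_univ v]
    refine Submodule.sum_mem _ fun c _ => Submodule.smul_mem _ _ ?_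
    -- basis vector at c is in the range
    have hcB : (c : Fin n → 𝔽) ∈ (↑B : Set (Fin n → 𝔽)) := c.2
    have hnc := hind c.1 hcB
    rw [pClosure, Set.mem_setOf_eq] at hnc
    push_neg at hnc
    obtain ⟨F, hF, hFne⟩ := hnc
    refine ⟨(eval S c.1 F)⁻¹ • F, ?_⟩
    funext j
    show eval S j.1 ((eval S c.1 F)⁻¹ • F) = if c = j then 1 else 0
    rw [eval_smul hn hS]
    by_cases hjc : c = j
    · subst hjc
      rw [if_pos rfl, inv_mul_cancel₀ hFne]
    · rw [if_neg hjc]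
      have hj : j.1 ∈ (↑B : Set (Fin n → 𝔽)) \ {c.1} := by
        refine ⟨j.2, ?_⟩
        simp only [Set.mem_singleton_iff]
        intro hj
        exact hjc (Subtype.ext hj.symm)
      rw [hF j.1 hj, mul_zero]
  rw [evalRank, htop, finrank_top, Module.finrank_pi, Fintype.card_coe]

lemma card_le_card_of_pindep (hn : 0 < n) (hS : HasCommRule S σ δ)
    {A B₀ : Finset (Fin n → 𝔽)} (hind : PIndep S ↑B₀)
    (hsub : (↑B₀ : Set (Fin n → 𝔽)) ⊆ pClosure S ↑A) : B₀.card ≤ A.card := by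
  classical
  have h1 : B₀.card = evalRank S hn hS B₀ := (evalRank_of_pindep S hn hS hind).symm
  have h2 : evalRank S hn hS B₀ ≤ evalRank S hn hS (B₀ ∪ A) :=
    evalRank_mono S hn hS Finset.subset_union_left
  have h3 : evalRank S hn hS (B₀ ∪ A) ≤ evalRank S hn hS A := by
    apply evalRank_le_of_closure S hn hS Finset.subset_union_right
    rw [Finset.coe_union]
    exact Set.union_subset hsub (subset_pClosure _)
  have h4 := evalRank_le_card S hn hS A
  omega

end LinAlg
end SkewPoly
/-- Any two P-bases of a finitely generated P-closed set are finite
and have the same number of elements. -/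
theorem stmt14 {𝔽 : Type*} [DivisionRing 𝔽] {n : ℕ} (hn : 0 < n)
    (σ : 𝔽 → Matrix (Fin n) (Fin n) 𝔽) (δ : 𝔽 → Fin n → 𝔽)
    (hσ : IsMatrixMorphism σ) (hδ : IsVectorDerivation σ δ)
    (S : RawMul 𝔽 n) (hS : HasCommRule S σ δ)
    (Ω : Set (Fin n → 𝔽)) (hΩ : IsPClosed S Ω) (hfg : FinGen S Ω)
    (B₁ B₂ : Set (Fin n → 𝔽)) (h₁ : IsPBasis S B₁ Ω) (h₂ : IsPBasis S B₂ Ω) :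
    B₁.Finite ∧ B₂.Finite ∧ B₁.ncard = B₂.ncard := by
  classical
  obtain ⟨hB₁Ω, hB₁ind, hB₁cl⟩ := h₁
  obtain ⟨hB₂Ω, hB₂ind, hB₂cl⟩ := h₂
  obtain ⟨G, hGfin, hGΩ, hGcl⟩ := hfg
  have fin_basis : ∀ B : Set (Fin n → 𝔽), B ⊆ Ω → PIndep S B → B.Finite := by
    intro B hBΩ hBind
    by_contra hinf
    obtain ⟨t, htB, htcard⟩ :=
      (Set.Infinite.exists_subset_card_eq hinf) (hGfin.toFinset.card + 1)
    have hind_t : PIndep S ↑t := hBind.mono htB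
    have hsub : (↑t : Set (Fin n → 𝔽)) ⊆ pClosure S ↑hGfin.toFinset := by
      rw [hGfin.coe_toFinset, hGcl]
      exact htB.trans hBΩ
    have := card_le_card_of_pindep S hn hS hind_t hsub
    omega
  have hfin₁ := fin_basis B₁ hB₁Ω hB₁ind
  have hfin₂ := fin_basis B₂ hB₂Ω hB₂ind
  refine ⟨hfin₁, hfin₂, ?_⟩
  have hc₁ : (↑hfin₁.toFinset : Set (Fin n → 𝔽)) = B₁ := hfin₁.coe_toFinset
  have hc₂ : (↑hfin₂.toFinset : Set (Fin n → 𝔽)) = B₂ := hfin₂.coe_toFinset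
  have le12 : hfin₁.toFinset.card ≤ hfin₂.toFinset.card := by
    apply card_le_card_of_pindep S hn hS (by rw [hc₁]; exact hB₁ind)
    rw [hc₁, hc₂, hB₂cl]
    exact hB₁Ω
  have le21 : hfin₂.toFinset.card ≤ hfin₁.toFinset.card := by
    apply card_le_card_of_pindep S hn hS (by rw [hc₂]; exact hB₂ind)
    rw [hc₁, hc₂, hB₁cl]
    exact hB₂Ω
  rw [← hc₁, ← hc₂, Set.ncard_coe_finset, Set.ncard_coe_finset]
  omega
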